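/- arXiv:1208.0364 — 3 statements merged into one kernel-verified Lean document; each statement's English description precedes it below -/
import Mathlib

section
/- Let G be a locally finite graph, x₀ a vertex, and e = (x₀, y) an edge. For reinforced random walk on G started at x₀ with reinforcement function f(n) = 1 + n², with positive probability the walk traverses e back and forth forever, i.e. x_{2t} = x₀ and x_{2t+1} = y for all t ≥ 0. -/
lemma sum_inv_one_add_sq_le (l : ℕ) :
    ∑ i ∈ Finset.range l, (1 + (i:ℝ)^2)⁻¹ ≤ 3 := by
  have key : ∀ n : ℕ, ∑ i ∈ Finset.range (n+1), (1 + (i:ℝ)^2)⁻¹ ≤ 3 - 2/((n:ℝ)+1) := by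
    intro n
    induction n with
    | zero => norm_num
    | succ m ih =>
      rw [Finset.sum_range_succ]
      have hm : (0:ℝ) < (m:ℝ)+1 := by positivity
      have hm2 : (0:ℝ) < (m:ℝ)+2 := by positivity
      have hsq : (0:ℝ) < 1 + ((m:ℝ)+1)^2 := by positivity
      have step : (1 + ((m:ℝ)+1)^2)⁻¹ ≤ 2/((m:ℝ)+1) - 2/((m:ℝ)+2) := by
        rw [div_sub_div _ _ (ne_of_gt hm) (ne_of_gt hm2), inv_eq_one_div,
          div_le_div_iff₀ hsq (by positivity)]
        nlinarith [sq_nonneg ((m:ℝ))]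
      push_cast
      calc ∑ i ∈ Finset.range (m+1), (1 + (i:ℝ)^2)⁻¹ + (1 + ((m:ℝ)+1)^2)⁻¹
          ≤ (3 - 2/((m:ℝ)+1)) + (2/((m:ℝ)+1) - 2/((m:ℝ)+2)) := add_le_add ih step
        _ = 3 - 2/((m:ℝ)+1+1) := by ring_nf
  cases l with
  | zero => norm_num
  | succ n =>
    have h2 : (0:ℝ) < 2/((n:ℝ)+1) := by positivity
    linarith [key n]


/-- `ntrav γ t e` is the number of traversals `N(e,t)` of the undirected edge
`e` by the walk `γ` during the first `t` steps, counting both directions. -/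
def ntrav {V : Type*} [DecidableEq V] (γ : ℕ → V) (t : ℕ) (e : Sym2 V) : ℕ :=
  ((Finset.range t).filter (fun s => s(γ s, γ (s+1)) = e)).card

/-- The probability that the reinforced random walk with reinforcement
function `f` on the locally finite graph `G` begins with the first `l` steps
of the walk `γ`: the product over each step of
`f(N((γ_i,γ_{i+1}),i))` normalized over the neighbours of `γ_i`. -/
noncomputable def pathProb {V : Type*} [DecidableEq V] (G : SimpleGraph V)
    [∀ v : V, Fintype (G.neighborSet v)] (f : ℕ → ℝ) (γ : ℕ → V) (l : ℕ) : ℝ :=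
  ∏ i ∈ Finset.range l,
    f (ntrav γ i s(γ i, γ (i+1))) /
      ∑ z ∈ G.neighborFinset (γ i), f (ntrav γ i s(γ i, z))

/-- For reinforced random walk with reinforcement function `f(n) = 1 + n²` on
an arbitrary locally finite graph `G`, started at `x₀`, and any edge
`e = (x₀, y)`, with positive probability the walk oscillates across `e`
forever, i.e. `x_{2t} = x₀` and `x_{2t+1} = y` for all `t`.  (The infinite
oscillation event is the decreasing intersection of the cylinder events that
the walk follows the alternating path for `l` steps, so its probability is the
infimum of their probabilities; positivity is stated as a uniform positive
lower bound `c` on these cylinder probabilities.) -/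
theorem superlinear_sticks_with_positive_probability {V : Type*} [DecidableEq V]
    (G : SimpleGraph V) [∀ v : V, Fintype (G.neighborSet v)]
    (x₀ y : V) (h : G.Adj x₀ y) :
    ∃ c > (0:ℝ), ∀ l : ℕ,
      c ≤ pathProb G (fun n => 1 + (n : ℝ)^2)
            (fun t => if t % 2 = 0 then x₀ else y) l := by
  classical
  set γ : ℕ → V := fun t => if t % 2 = 0 then x₀ else y with hγ
  set D : ℕ := max (G.degree x₀) (G.degree y) with hD
  have hx₀y : x₀ ≠ y := h.ne
  have hyadj : G.Adj y x₀ := h.symm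
  have hdx : 1 ≤ G.degree x₀ := G.degree_pos_iff_exists_adj x₀ |>.2 ⟨y, h⟩
  have hdy : 1 ≤ G.degree y := G.degree_pos_iff_exists_adj y |>.2 ⟨x₀, hyadj⟩
  have hD1 : 1 ≤ D := le_trans hdx (le_max_left _ _)
  have hDR : (0:ℝ) ≤ (D:ℝ) - 1 := by
    have : (1:ℝ) ≤ (D:ℝ) := by exact_mod_cast hD1
    linarith
  refine ⟨Real.exp (-(3 * ((D:ℝ) - 1))), Real.exp_pos _, fun l => ?_⟩
  -- edge at each step is s(x₀, y)
  have hedge : ∀ s : ℕ, s(γ s, γ (s+1)) = s(x₀, y) := by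
    intro s
    by_cases hs : s % 2 = 0
    · have h1 : (s+1) % 2 ≠ 0 := by omega
      simp [hγ, hs, h1]
    · have h2 : (s+1) % 2 = 0 := by omega
      simp [hγ, hs, h2, Sym2.eq_swap]
  have hnt : ∀ (i : ℕ) (e : Sym2 V), ntrav γ i e = if s(x₀,y) = e then i else 0 := by
    intro i e
    unfold ntrav
    simp only [hedge]
    split_ifs with he
    · simp [he]
    · simp [he]
  -- degree of γ i
  have hdeg : ∀ i, 1 ≤ G.degree (γ i) ∧ G.degree (γ i) ≤ D := by
    intro i
    by_cases hi : i % 2 = 0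
    · have hgi : γ i = x₀ := by simp [hγ, hi]
      rw [hgi]; exact ⟨hdx, le_max_left _ _⟩
    · have hgi : γ i = y := by simp [hγ, hi]
      rw [hgi]; exact ⟨hdy, le_max_right _ _⟩
  -- numerator
  have hnum : ∀ i : ℕ, ntrav γ i s(γ i, γ (i+1)) = i := by
    intro i
    rw [hedge i, hnt]
    simp
  -- denominator
  have hden : ∀ i : ℕ,
      ∑ z ∈ G.neighborFinset (γ i), (1 + (ntrav γ i s(γ i, z) : ℝ)^2)
        = (G.degree (γ i) : ℝ) + (i:ℝ)^2 := by
    intro i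
    have key : ∀ (a b : V), G.Adj a b → s(x₀,y) = s(a,b) →
        ∑ z ∈ G.neighborFinset a, (1 + (ntrav γ i s(a, z) : ℝ)^2)
          = (G.degree a : ℝ) + (i:ℝ)^2 := by
      intro a b hab he
      have hsum : ∀ z ∈ G.neighborFinset a,
          (1 + (ntrav γ i s(a, z) : ℝ)^2)
            = 1 + (if b = z then ((i:ℝ))^2 else 0) := by
        intro z hz
        rw [hnt]
        by_cases hzb : b = z
        · subst hzb
          rw [if_pos he, if_pos rfl]
        · have hne2 : s(x₀,y) ≠ s(a,z) := by
            rw [he]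
            intro hcon
            exact hzb (Sym2.congr_right.1 hcon)
          rw [if_neg hne2, if_neg hzb]
          norm_num
      rw [Finset.sum_congr rfl hsum, Finset.sum_add_distrib, Finset.sum_const,
        Finset.sum_ite_eq, if_pos (by simpa [SimpleGraph.mem_neighborFinset] using hab)]
      simp [SimpleGraph.card_neighborFinset_eq_degree]
    by_cases hi : i % 2 = 0
    · have hgi : γ i = x₀ := by simp [hγ, hi]
      rw [hgi]; exact key x₀ y h rfl
    · have hgi : γ i = y := by simp [hγ, hi]
      rw [hgi]; exact key y x₀ hyadj (Sym2.eq_swap)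
  -- rewrite pathProb as explicit product
  have hprob : pathProb G (fun n => 1 + (n : ℝ)^2) γ l
      = ∏ i ∈ Finset.range l, (1 + (i:ℝ)^2) / ((G.degree (γ i) : ℝ) + (i:ℝ)^2) := by
    unfold pathProb
    refine Finset.prod_congr rfl fun i _ => ?_
    rw [hnum i]
    congr 1
    exact hden i
  rw [hprob]
  -- termwise lower bound by exponential
  have hterm : ∀ i ∈ Finset.range l,
      Real.exp (-(((D:ℝ) - 1) * (1 + (i:ℝ)^2)⁻¹))
        ≤ (1 + (i:ℝ)^2) / ((G.degree (γ i) : ℝ) + (i:ℝ)^2) := by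
    intro i _
    obtain ⟨hd1, hdD⟩ := hdeg i
    have hd1R : (1:ℝ) ≤ (G.degree (γ i) : ℝ) := by exact_mod_cast hd1
    have hdDR : (G.degree (γ i) : ℝ) ≤ (D:ℝ) := by exact_mod_cast hdD
    have hpos : (0:ℝ) < 1 + (i:ℝ)^2 := by positivity
    have hposd : (0:ℝ) < (G.degree (γ i) : ℝ) + (i:ℝ)^2 := by positivity
    have hposD : (0:ℝ) < (D:ℝ) + (i:ℝ)^2 := by nlinarith
    set a : ℝ := ((D:ℝ) - 1) * (1 + (i:ℝ)^2)⁻¹ with ha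
    have hexp : ((D:ℝ) + (i:ℝ)^2) / (1 + (i:ℝ)^2) ≤ Real.exp a := by
      have h1 : a + 1 ≤ Real.exp a := Real.add_one_le_exp a
      have h2 : ((D:ℝ) + (i:ℝ)^2) / (1 + (i:ℝ)^2) = a + 1 := by
        rw [ha]
        field_simp
        ring
      rw [h2]; exact h1
    rw [Real.exp_neg]
    have hq : (0:ℝ) < ((D:ℝ) + (i:ℝ)^2) / (1 + (i:ℝ)^2) := by positivity
    calc (Real.exp a)⁻¹ ≤ (((D:ℝ) + (i:ℝ)^2) / (1 + (i:ℝ)^2))⁻¹ :=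
          inv_anti₀ hq hexp
      _ = (1 + (i:ℝ)^2) / ((D:ℝ) + (i:ℝ)^2) := by rw [inv_div]
      _ ≤ (1 + (i:ℝ)^2) / ((G.degree (γ i) : ℝ) + (i:ℝ)^2) := by
          apply div_le_div_of_nonneg_left (le_of_lt hpos) hposd
          linarith
  have hprodge : ∏ i ∈ Finset.range l, Real.exp (-(((D:ℝ) - 1) * (1 + (i:ℝ)^2)⁻¹))
      ≤ ∏ i ∈ Finset.range l, (1 + (i:ℝ)^2) / ((G.degree (γ i) : ℝ) + (i:ℝ)^2) :=
    Finset.prod_le_prod (fun i _ => (Real.exp_pos _).le) hterm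
  refine le_trans ?_ hprodge
  rw [← Real.exp_sum]
  apply Real.exp_le_exp.2
  have hsum : ∑ i ∈ Finset.range l, ((D:ℝ) - 1) * (1 + (i:ℝ)^2)⁻¹ ≤ 3 * ((D:ℝ) - 1) := by
    rw [← Finset.mul_sum]
    have := mul_le_mul_of_nonneg_left (sum_inv_one_add_sq_le l) hDR
    linarith
  have : ∑ i ∈ Finset.range l, -(((D:ℝ) - 1) * (1 + (i:ℝ)^2)⁻¹)
      = -∑ i ∈ Finset.range l, ((D:ℝ) - 1) * (1 + (i:ℝ)^2)⁻¹ := by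
    rw [Finset.sum_neg_distrib]
  rw [this]
  linarith
end

section
/- Linearly reinforced random walk is partially exchangeable: for any two finite paths γ and γ' in G starting at x₀, of the same length, ending at the same vertex, and such that every undirected edge is traversed the same number of times by γ and by γ', the probabilities that the LRRW begins with γ and with γ' are equal. -/
open Finset

lemma aux_count_lt {t : Finset ℕ} {i j : ℕ} (hi : i ∈ t) (hij : i < j) :
    (t.filter (· < i)).card < (t.filter (· < j)).card := by
  have hsub : insert i (t.filter (· < i)) ⊆ t.filter (· < j) := by
    intro s hs
    rcases Finset.mem_insert.mp hs with rfl | hs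
    · exact Finset.mem_filter.mpr ⟨hi, hij⟩
    · rcases Finset.mem_filter.mp hs with ⟨h1, h2⟩
      exact Finset.mem_filter.mpr ⟨h1, h2.trans hij⟩
  have h := Finset.card_le_card hsub
  rwa [Finset.card_insert_of_notMem (by simp)] at h

lemma prod_fiber_reindex {E : Type*} [DecidableEq E] (c : ℕ → E) (l : ℕ) (F : E → ℕ → ℝ) :
    ∏ i ∈ Finset.range l, F (c i) (((Finset.range i).filter fun s => c s = c i).card)
      = ∏ e ∈ (Finset.range l).image c,
          ∏ k ∈ Finset.range (((Finset.range l).filter fun s => c s = e).card), F e k := by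
  rw [← Finset.prod_fiberwise_of_maps_to (fun i hi => Finset.mem_image_of_mem c hi)
      (fun i => F (c i) (((Finset.range i).filter fun s => c s = c i).card))]
  refine Finset.prod_congr rfl fun e he => ?_
  set t := (Finset.range l).filter fun s => c s = e with ht
  have hloc : ∀ i ∈ t, ((Finset.range i).filter fun s => c s = c i) = t.filter (· < i) := by
    intro i hi
    rcases Finset.mem_filter.mp hi with ⟨hil, hci⟩
    rw [Finset.mem_range] at hil
    ext s
    simp only [ht, Finset.mem_filter, Finset.mem_range, hci]
    constructor
    · rintro ⟨h1, h2⟩; exact ⟨⟨h1.trans hil, h2⟩, h1⟩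
    · rintro ⟨⟨_, h2⟩, h3⟩; exact ⟨h3, h2⟩
  have hmaps : ∀ i (_ : i ∈ t), (t.filter (· < i)).card ∈ Finset.range t.card := by
    intro i hi
    rw [Finset.mem_range]
    refine Finset.card_lt_card ?_
    exact (Finset.ssubset_iff_of_subset (Finset.filter_subset _ _)).mpr ⟨i, hi, by simp⟩
  have hinj : ∀ a1 a2 (_ : a1 ∈ t) (_ : a2 ∈ t),
      (t.filter (· < a1)).card = (t.filter (· < a2)).card → a1 = a2 := by
    intro a1 a2 h1 h2 heq
    by_contra hne
    rcases lt_or_gt_of_ne hne with h | h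
    · exact absurd heq (Nat.ne_of_lt (aux_count_lt h1 h))
    · exact absurd heq.symm (Nat.ne_of_lt (aux_count_lt h2 h))
  refine Finset.prod_bij (fun i _ => (t.filter (· < i)).card) hmaps
    (fun a1 h1 a2 h2 => hinj a1 a2 h1 h2) ?_ ?_
  · intro b hb
    obtain ⟨aa, haa, hab⟩ := Finset.surj_on_of_inj_on_of_card_le
      (fun i (_ : i ∈ t) => (t.filter (· < i)).card) hmaps
      (fun a1 a2 h1 h2 => hinj a1 a2 h1 h2) (by simp) b hb
    exact ⟨aa, haa, hab.symm⟩
  · intro i hi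
    rw [hloc i hi, (Finset.mem_filter.mp hi).2]

/-- Incident-traversal count: sum over neighbours of traversal counts equals
departures plus arrivals. -/
lemma sum_ntrav_eq {V : Type*} [DecidableEq V] (G : SimpleGraph V)
    [∀ v : V, Fintype (G.neighborSet v)] (γ : ℕ → V) (l i : ℕ) (hil : i ≤ l)
    (hadj : ∀ s < l, G.Adj (γ s) (γ (s+1))) (v : V) :
    ∑ z ∈ G.neighborFinset v, ntrav γ i s(v, z)
      = ((Finset.range i).filter fun s => γ s = v).card
        + ((Finset.range i).filter fun s => γ (s+1) = v).card := by
  classical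
  have hdisj : ∀ z ∈ G.neighborFinset v, ∀ z' ∈ G.neighborFinset v, z ≠ z' →
      Disjoint ((Finset.range i).filter fun s => s(γ s, γ (s+1)) = s(v, z))
        ((Finset.range i).filter fun s => s(γ s, γ (s+1)) = s(v, z')) := by
    intro z _ z' _ hzz'
    rw [Finset.disjoint_left]
    intro s hs hs'
    rcases Finset.mem_filter.mp hs with ⟨_, h1⟩
    rcases Finset.mem_filter.mp hs' with ⟨_, h2⟩
    exact hzz' (Sym2.congr_right.mp (h1 ▸ h2 ▸ rfl : s(v, z) = s(v, z')))
  calc ∑ z ∈ G.neighborFinset v, ntrav γ i s(v, z)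
      = ((G.neighborFinset v).biUnion fun z =>
          (Finset.range i).filter fun s => s(γ s, γ (s+1)) = s(v, z)).card :=
        (Finset.card_biUnion hdisj).symm
    _ = ((Finset.range i).filter fun s => γ s = v ∨ γ (s+1) = v).card := by
        congr 1
        ext s
        simp only [Finset.mem_biUnion, Finset.mem_filter, Finset.mem_range,
          SimpleGraph.mem_neighborFinset]
        constructor
        · rintro ⟨z, hz, hsi, he⟩
          rw [Sym2.eq_iff] at he
          rcases he with ⟨h1, _⟩ | ⟨_, h2⟩
          · exact ⟨hsi, Or.inl h1⟩
          · exact ⟨hsi, Or.inr h2⟩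
        · rintro ⟨hsi, h | h⟩
          · exact ⟨γ (s+1), h ▸ hadj s (lt_of_lt_of_le hsi hil), hsi, by rw [h]⟩
          · exact ⟨γ s, h ▸ (hadj s (lt_of_lt_of_le hsi hil)).symm, hsi,
              by rw [← h, Sym2.eq_swap]⟩
    _ = _ := by
        rw [Finset.filter_or, Finset.card_union_of_disjoint]
        rw [Finset.disjoint_left]
        intro s hs hs'
        rcases Finset.mem_filter.mp hs with ⟨hsi, h1⟩
        rcases Finset.mem_filter.mp hs' with ⟨_, h2⟩
        rw [Finset.mem_range] at hsi
        exact G.irrefl (h1 ▸ h2 ▸ hadj s (lt_of_lt_of_le hsi hil))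

/-- Arrival count vs departure count. -/
lemma shift_count {V : Type*} [DecidableEq V] (γ : ℕ → V) (v : V) (i : ℕ) :
    ((Finset.range i).filter fun s => γ (s+1) = v).card + (if γ 0 = v then 1 else 0)
      = ((Finset.range i).filter fun s => γ s = v).card + (if γ i = v then 1 else 0) := by
  induction i with
  | zero => simp
  | succ n ih =>
    rw [Finset.range_add_one, Finset.filter_insert, Finset.filter_insert]
    by_cases h1 : γ (n+1) = v <;> by_cases h2 : γ n = v
    · simp only [if_pos h1, if_pos h2] at ih ⊢
      rw [Finset.card_insert_of_notMem (by simp), Finset.card_insert_of_notMem (by simp)]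
      omega
    · simp only [if_pos h1, if_neg h2] at ih ⊢
      rw [Finset.card_insert_of_notMem (by simp)]
      omega
    · simp only [if_neg h1, if_pos h2] at ih ⊢
      rw [Finset.card_insert_of_notMem (by simp)]
      omega
    · simp only [if_neg h1, if_neg h2] at ih ⊢
      omega

lemma denom_step {V : Type*} [DecidableEq V] (G : SimpleGraph V)
    [∀ v : V, Fintype (G.neighborSet v)] (a : ℝ) (x₀ : V) (γ : ℕ → V) (l i : ℕ)
    (hil : i < l) (h0 : γ 0 = x₀) (hadj : ∀ s < l, G.Adj (γ s) (γ (s+1))) :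
    ∑ z ∈ G.neighborFinset (γ i), (a + (ntrav γ i s(γ i, z) : ℝ))
      = a * (G.degree (γ i))
        + (2 * (((Finset.range i).filter fun s => γ s = γ i).card : ℝ) + 1
            - if x₀ = γ i then 1 else 0) := by
  subst h0
  have hsum := sum_ntrav_eq G γ l i hil.le hadj (γ i)
  have hs := shift_count γ (γ i) i
  rw [if_pos rfl] at hs
  rw [Finset.sum_add_distrib, Finset.sum_const, nsmul_eq_mul, ← Nat.cast_sum, hsum]
  have hdeg : (G.neighborFinset (γ i)).card = G.degree (γ i) := rfl
  rw [hdeg]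
  split_ifs at hs ⊢ with h
  · have hW : ((Finset.range i).filter fun s => γ (s+1) = γ i).card
        = ((Finset.range i).filter fun s => γ s = γ i).card := by omega
    rw [hW]
    push_cast
    ring
  · have hW : ((Finset.range i).filter fun s => γ (s+1) = γ i).card
        = ((Finset.range i).filter fun s => γ s = γ i).card + 1 := by omega
    rw [hW]
    push_cast
    ring

/-- Linearly reinforced random walk (reinforcement function `a + n`, `a > 0`)
is partially exchangeable: any two paths of the same length `l`, starting at
`x₀`, ending at the same vertex, and traversing every undirected edge the same
number of times, have the same probability. -/
theorem lrrw_partially_exchangeable {V : Type*} [DecidableEq V]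
    (G : SimpleGraph V) [∀ v : V, Fintype (G.neighborSet v)]
    (a : ℝ) (ha : 0 < a) (x₀ : V) (γ γ' : ℕ → V) (l : ℕ)
    (h0 : γ 0 = x₀) (h0' : γ' 0 = x₀)
    (hadj : ∀ i < l, G.Adj (γ i) (γ (i+1)))
    (hadj' : ∀ i < l, G.Adj (γ' i) (γ' (i+1)))
    (hend : γ l = γ' l)
    (hcount : ∀ e : Sym2 V, ntrav γ l e = ntrav γ' l e) :
    pathProb G (fun n => a + (n : ℝ)) γ l = pathProb G (fun n => a + (n : ℝ)) γ' l := by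
  classical
  -- visit counts agree
  have hV : ∀ v : V, ((Finset.range l).filter fun s => γ s = v).card
      = ((Finset.range l).filter fun s => γ' s = v).card := by
    intro v
    have h1 := sum_ntrav_eq G γ l l le_rfl hadj v
    have h2 := sum_ntrav_eq G γ' l l le_rfl hadj' v
    have hs1 := shift_count γ v l
    have hs2 := shift_count γ' v l
    have hsum : ∑ z ∈ G.neighborFinset v, ntrav γ l s(v, z)
        = ∑ z ∈ G.neighborFinset v, ntrav γ' l s(v, z) :=
      Finset.sum_congr rfl fun z _ => hcount _
    rw [h0] at hs1
    rw [h0'] at hs2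
    rw [hend] at hs1
    omega
  -- vertex images agree
  have hmemv : ∀ (δ : ℕ → V) (v : V), v ∈ (Finset.range l).image δ ↔
      ((Finset.range l).filter fun s => δ s = v).card ≠ 0 := by
    intro δ v
    rw [Ne, Finset.card_eq_zero, ← Finset.not_nonempty_iff_eq_empty, not_not,
      Finset.filter_nonempty_iff, Finset.mem_image]
  have himg : (Finset.range l).image γ = (Finset.range l).image γ' := by
    ext v
    rw [hmemv γ v, hmemv γ' v, hV v]
  -- edge images agree
  have hmeme : ∀ (δ : ℕ → V) (e : Sym2 V),
      e ∈ (Finset.range l).image (fun i => s(δ i, δ (i+1))) ↔ ntrav δ l e ≠ 0 := by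
    intro δ e
    rw [ntrav, Ne, Finset.card_eq_zero, ← Finset.not_nonempty_iff_eq_empty, not_not,
      Finset.filter_nonempty_iff, Finset.mem_image]
  have heimg : (Finset.range l).image (fun i => s(γ i, γ (i+1)))
      = (Finset.range l).image (fun i => s(γ' i, γ' (i+1))) := by
    ext e
    rw [hmeme γ e, hmeme γ' e, hcount e]
  unfold pathProb
  rw [Finset.prod_div_distrib, Finset.prod_div_distrib]
  congr 1
  · -- numerators
    have hnum : ∀ δ : ℕ → V, (∏ i ∈ Finset.range l, (a + (ntrav δ i s(δ i, δ (i+1)) : ℝ)))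
        = ∏ e ∈ (Finset.range l).image (fun i => s(δ i, δ (i+1))),
            ∏ k ∈ Finset.range (ntrav δ l e), (a + (k : ℝ)) := by
      intro δ
      exact prod_fiber_reindex (fun i => s(δ i, δ (i+1))) l (fun _ n => a + (n : ℝ))
    rw [hnum γ, hnum γ', heimg]
    exact Finset.prod_congr rfl fun e he => by rw [hcount e]
  · -- denominators
    set F : V → ℕ → ℝ := fun v j => a * (G.degree v)
      + (2 * (j : ℝ) + 1 - if x₀ = v then 1 else 0) with hF
    have hden : ∀ δ : ℕ → V, δ 0 = x₀ → (∀ s < l, G.Adj (δ s) (δ (s+1))) →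
        (∏ i ∈ Finset.range l, ∑ z ∈ G.neighborFinset (δ i), (a + (ntrav δ i s(δ i, z) : ℝ)))
          = ∏ v ∈ (Finset.range l).image δ,
              ∏ j ∈ Finset.range (((Finset.range l).filter fun s => δ s = v).card), F v j := by
      intro δ hδ0 hδadj
      rw [Finset.prod_congr rfl (fun i hi =>
        denom_step G a x₀ δ l i (Finset.mem_range.mp hi) hδ0 hδadj)]
      exact prod_fiber_reindex δ l F
    rw [hden γ h0 hadj, hden γ' h0' hadj', himg]
    exact Finset.prod_congr rfl fun v hv => by rw [hV v]
end

section
/- Let f: ℕ → (0,∞) with Σ_{n=0}^∞ 1/f(n) < ∞ and f increasing. For reinforced random walk with reinforcement f on the 3-vertex path graph started at the middle vertex, with positive probability the walk never traverses the right edge (i.e. gets stuck oscillating on the left edge). -/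
/-- The path graph on three vertices `0 – 1 – 2`. -/
def threePath : SimpleGraph (Fin 3) where
  Adj i j := (i.val + 1 = j.val) ∨ (j.val + 1 = i.val)
  symm := by constructor; intro i j hij; tauto
  loopless := by constructor; intro i hi; omega

instance : DecidableRel threePath.Adj :=
  fun i j => inferInstanceAs (Decidable (_ ∨ _))

section aux
private def γ₀ : ℕ → Fin 3 := fun t => if t % 2 = 0 then 1 else 0

lemma gamma_edge (s : ℕ) : s(γ₀ s, γ₀ (s+1)) = s((0 : Fin 3), 1) := by
  rcases Nat.mod_two_eq_zero_or_one s with h | h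
  · have h1 : (s+1) % 2 = 1 := by omega
    simp only [γ₀, h, h1]
    norm_num [Sym2.eq_swap]
  · have h1 : (s+1) % 2 = 0 := by omega
    simp only [γ₀, h, h1]
    norm_num

lemma ntrav01 (i : ℕ) : ntrav γ₀ i s((0:Fin 3), 1) = i := by
  unfold ntrav
  rw [Finset.filter_true_of_mem (fun s _ => gamma_edge s), Finset.card_range]

lemma ntrav12 (i : ℕ) : ntrav γ₀ i s((1:Fin 3), 2) = 0 := by
  unfold ntrav
  rw [Finset.card_eq_zero, Finset.filter_eq_empty_iff]
  intro s _
  rw [gamma_edge s]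
  decide

lemma exp_bound {a : ℝ} (h0 : 0 ≤ a) (h2 : a ≤ 1/2) : Real.exp (-(2*a)) ≤ 1 - a := by
  have h1 : (2*a) + 1 ≤ Real.exp (2*a) := Real.add_one_le_exp _
  have h3 : Real.exp (-(2*a)) * Real.exp (2*a) = 1 := by
    rw [← Real.exp_add]; norm_num
  have h4 : (0:ℝ) < Real.exp (-(2*a)) := Real.exp_pos _
  nlinarith [sq_nonneg a]
end aux


/-- For a reinforcement function `f` which is increasing and satisfies
`Σ 1/f(n) < ∞`, reinforced random walk on the 3-vertex path started at the
middle vertex `1` gets stuck oscillating on the left edge with positive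
probability: never traversing the right edge for the first `l` steps means
following the alternating path `1,0,1,0,…`, and these cylinder probabilities
admit a uniform positive lower bound `c`, so the intersection event (never
traversing the right edge) has probability at least `c > 0`. -/
theorem summable_reciprocal_sticks_on_three_path (f : ℕ → ℝ)
    (hpos : ∀ n, 0 < f n) (hmono : Monotone f)
    (hsum : Summable fun n => 1 / f n) :
    ∃ c > (0:ℝ), ∀ l : ℕ,
      c ≤ pathProb threePath f (fun t => if t % 2 = 0 then 1 else 0) l := by
  set T := ∑' n, 1 / f n with hT
  refine ⟨Real.exp (-(2 * f 0 * T)), Real.exp_pos _, fun l => ?_⟩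
  have hγ : (fun t => if t % 2 = 0 then (1 : Fin 3) else 0) = γ₀ := rfl
  rw [hγ]
  have hsum_le : ∑ i ∈ Finset.range l, 1 / f i ≤ T :=
    Summable.sum_le_tsum _ (fun i _ => one_div_nonneg.2 (hpos i).le) hsum
  have h0pos := hpos 0
  calc Real.exp (-(2 * f 0 * T))
      ≤ Real.exp (-(2 * f 0 * ∑ i ∈ Finset.range l, 1 / f i)) := by
        apply Real.exp_le_exp.2
        have : 0 ≤ 2 * f 0 := by positivity
        nlinarith
    _ = ∏ i ∈ Finset.range l, Real.exp (-(2 * (f 0 / f i))) := by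
        rw [← Real.exp_sum]
        congr 1
        rw [Finset.sum_neg_distrib, Finset.mul_sum, neg_inj]
        exact Finset.sum_congr rfl (fun x _ => by ring)
    _ ≤ pathProb threePath f γ₀ l := by
        unfold pathProb
        apply Finset.prod_le_prod (fun i _ => (Real.exp_pos _).le)
        intro i _
        have hfi := hpos i
        have hf0i : f 0 ≤ f i := hmono (Nat.zero_le i)
        rcases Nat.mod_two_eq_zero_or_one i with h | h
        · -- even step: from 1, factor f i / (f i + f 0)
          have hgi : γ₀ i = 1 := by simp [γ₀, h]
          have hgi1 : γ₀ (i+1) = 0 := by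
            have : (i+1) % 2 = 1 := by omega
            simp [γ₀, this]
          rw [hgi, hgi1]
          have hnb : threePath.neighborFinset 1 = {0, 2} := by decide
          rw [hnb, Finset.sum_insert (by decide), Finset.sum_singleton]
          have e1 : s((1:Fin 3), 0) = s((0:Fin 3), 1) := Sym2.eq_swap
          rw [e1, ntrav01, ntrav12]
          have key : Real.exp (-(2 * (f 0 / (f i + f 0)))) ≤ 1 - f 0 / (f i + f 0) := by
            apply exp_bound
            · positivity
            · rw [div_le_iff₀ (by positivity)]; nlinarith
          have heq : 1 - f 0 / (f i + f 0) = f i / (f i + f 0) := by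
            field_simp; ring
          rw [heq] at key
          refine le_trans (Real.exp_le_exp.2 ?_) key
          have h1 : f 0 / (f i + f 0) ≤ f 0 / f i := by
            apply div_le_div_of_nonneg_left h0pos.le hfi
            linarith
          nlinarith
        · -- odd step: from 0, factor 1
          have hgi : γ₀ i = 0 := by simp [γ₀, h]
          have hgi1 : γ₀ (i+1) = 1 := by
            have : (i+1) % 2 = 0 := by omega
            simp [γ₀, this]
          rw [hgi, hgi1]
          have hnb : threePath.neighborFinset 0 = {1} := by decide
          rw [hnb, Finset.sum_singleton, ntrav01, div_self (hpos i).ne']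
          calc Real.exp (-(2 * (f 0 / f i))) ≤ Real.exp 0 := by
                apply Real.exp_le_exp.2
                have : 0 < f 0 / f i := by positivity
                linarith
            _ = 1 := Real.exp_zero
end
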